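/- Let θ, P_S, p_C, σ_B², σ_C², σ_D², φ_SB, φ_SC, φ_CB > 0, β ≥ 0, λ ∈ [0,1], ξ_B > 0, ξ_D > 0, and let α satisfy ξ_B/(1+ξ_B) < α ≤ 1. Define P₂ = [φ_CB·p_C·(α − ξ_B + α·ξ_B)/(φ_SB·ξ_B·P_S + φ_CB·p_C·(α − ξ_B + α·ξ_B))]·exp(−ξ_D·(β·p_C^λ + σ_C²)/(φ_SC·P_S) − ξ_B·σ_B²/(φ_CB·p_C·(α − ξ_B + α·ξ_B)))·(1 − exp(−(θ/P_S)·(ξ_B·P_S/(φ_CB·p_C·(α − ξ_B + α·ξ_B)) + 1/φ_SB))), and P̃₂ = exp(−ξ_D·(β·p_C^λ + σ_C²)/(φ_SC·P_S) − ξ_B·(θ + σ_B²)/(φ_CB·p_C·(α − ξ_B + α·ξ_B)))·(1 − exp(−θ/(φ_SB·P_S))). Then P̃₂ ≤ P₂. Consequently 1 − (P₁ + P̃₂)·P₃ ≥ 1 − (P₁ + P₂)·P₃ for any P₁ ≥ 0 and P₃ ≥ 0, i.e., the joint outage probability of Theorem 2 is upper bounded by the worst-case-interference expression. -/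

import Mathlib

open Real

private lemma key_ineq (u v : ℝ) (hu : 0 ≤ u) (hv : 0 ≤ v) :
    Real.exp (-u) * (1 - Real.exp (-v)) * (u + v) ≤ v * (1 - Real.exp (-(u + v))) := by
  have h1 : 1 - Real.exp (-v) ≤ v := by
    have := Real.add_one_le_exp (-v); linarith
  have h2 : u * Real.exp (-u) ≤ 1 - Real.exp (-u) := by
    have h := Real.add_one_le_exp u
    have hpos : 0 < Real.exp (-u) := Real.exp_pos _
    have := mul_le_mul_of_nonneg_right h hpos.le
    rw [← Real.exp_add] at this
    simp at this
    nlinarith [Real.exp_pos (-u)]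
  have h3 : 0 ≤ 1 - Real.exp (-v) := by
    have : Real.exp (-v) ≤ 1 := Real.exp_le_one_iff.mpr (by linarith)
    linarith
  have h4 : 0 ≤ u * Real.exp (-u) := by positivity
  have h5 : u * Real.exp (-u) * (1 - Real.exp (-v)) ≤ v * (1 - Real.exp (-u)) :=
    calc u * Real.exp (-u) * (1 - Real.exp (-v)) ≤ u * Real.exp (-u) * v := by
          exact mul_le_mul_of_nonneg_left (by linarith) h4
      _ ≤ (1 - Real.exp (-u)) * v := mul_le_mul_of_nonneg_right h2 hv
      _ = v * (1 - Real.exp (-u)) := by ring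
  have hexp : Real.exp (-(u + v)) = Real.exp (-u) * Real.exp (-v) := by
    rw [← Real.exp_add]; ring_nf
  nlinarith [h5]

private lemma abstract_bound (E θ PS φSB ξB σB2 A : ℝ)
    (hθ : 0 < θ) (hPS : 0 < PS) (hφSB : 0 < φSB) (hξB : 0 < ξB)
    (hσB : 0 < σB2) (hA : 0 < A) :
    Real.exp (E - ξB * (θ + σB2) / A) * (1 - Real.exp (-θ / (φSB * PS))) ≤
      A / (φSB * ξB * PS + A) * Real.exp (E - ξB * σB2 / A) *
        (1 - Real.exp (-(θ / PS) * (ξB * PS / A + 1 / φSB))) := by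
  have hAne : A ≠ 0 := hA.ne'
  have hu : 0 < ξB * θ / A := by positivity
  have hv : 0 < θ / (φSB * PS) := by positivity
  set u := ξB * θ / A with hudef
  set v := θ / (φSB * PS) with hvdef
  have eq1 : E - ξB * (θ + σB2) / A = (E - ξB * σB2 / A) + (-u) := by
    rw [hudef]; field_simp; ring
  have eq2 : -(θ / PS) * (ξB * PS / A + 1 / φSB) = -(u + v) := by
    rw [hudef, hvdef]; field_simp
  have eq3 : -θ / (φSB * PS) = -v := by rw [hvdef]; ring
  have eq4 : A / (φSB * ξB * PS + A) = v / (u + v) := by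
    have hden : φSB * ξB * PS + A ≠ 0 := by positivity
    have huv : u + v ≠ 0 := by positivity
    rw [hudef, hvdef]; field_simp
  rw [eq1, eq2, eq3, eq4, Real.exp_add]
  have hkey := key_ineq u v hu.le hv.le
  rw [← le_div_iff₀ (by positivity : (0:ℝ) < u + v)] at hkey
  calc Real.exp (E - ξB * σB2 / A) * Real.exp (-u) * (1 - Real.exp (-v))
      = Real.exp (E - ξB * σB2 / A) * (Real.exp (-u) * (1 - Real.exp (-v))) := by ring
    _ ≤ Real.exp (E - ξB * σB2 / A) * (v * (1 - Real.exp (-(u + v))) / (u + v)) := by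
        exact mul_le_mul_of_nonneg_left hkey (Real.exp_pos _).le
    _ = v / (u + v) * Real.exp (E - ξB * σB2 / A) * (1 - Real.exp (-(u + v))) := by ring

theorem worst_case_interference_upper_bound
    (θ PS pC σB2 σC2 σD2 φSB φSC φCB β lam ξB ξD α : ℝ)
    (hθ : 0 < θ) (hPS : 0 < PS) (hpC : 0 < pC)
    (hσB : 0 < σB2) (hσC : 0 < σC2) (hσD : 0 < σD2)
    (hφSB : 0 < φSB) (hφSC : 0 < φSC) (hφCB : 0 < φCB)
    (hβ : 0 ≤ β) (hlam : lam ∈ Set.Icc (0 : ℝ) 1)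
    (hξB : 0 < ξB) (hξD : 0 < ξD)
    (hα₁ : ξB / (1 + ξB) < α) (hα₂ : α ≤ 1) :
    let P2 : ℝ := φCB * pC * (α - ξB + α * ξB) /
        (φSB * ξB * PS + φCB * pC * (α - ξB + α * ξB)) *
      Real.exp (-(ξD * (β * pC ^ lam + σC2)) / (φSC * PS)
        - ξB * σB2 / (φCB * pC * (α - ξB + α * ξB))) *
      (1 - Real.exp (-(θ / PS) *
        (ξB * PS / (φCB * pC * (α - ξB + α * ξB)) + 1 / φSB)))
    let P2t : ℝ := Real.exp (-(ξD * (β * pC ^ lam + σC2)) / (φSC * PS)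
        - ξB * (θ + σB2) / (φCB * pC * (α - ξB + α * ξB))) *
      (1 - Real.exp (-θ / (φSB * PS)))
    P2t ≤ P2 ∧
      ∀ P1 P3 : ℝ, 0 ≤ P1 → 0 ≤ P3 →
        1 - (P1 + P2) * P3 ≤ 1 - (P1 + P2t) * P3 := by
  intro P2 P2t
  have h1ξ : (0:ℝ) < 1 + ξB := by linarith
  have hαpos : 0 < α - ξB + α * ξB := by
    have := (div_lt_iff₀ h1ξ).mp hα₁
    nlinarith
  have hA : 0 < φCB * pC * (α - ξB + α * ξB) := by positivity
  have hmain : P2t ≤ P2 :=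
    abstract_bound (-(ξD * (β * pC ^ lam + σC2)) / (φSC * PS)) θ PS φSB ξB σB2
      (φCB * pC * (α - ξB + α * ξB)) hθ hPS hφSB hξB hσB hA
  refine ⟨hmain, fun P1 P3 hP1 hP3 => ?_⟩
  have : (P1 + P2t) * P3 ≤ (P1 + P2) * P3 :=
    mul_le_mul_of_nonneg_right (by linarith) hP3
  linarith
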